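/- Fix 𝗑 ∈ ℝ and γ ∈ ℝ, set x_τ := −τ + (π^{1/4}/√2)·𝗑·τ^{1/2} and Φ_τ(ξ) := −(τ/3)ξ³ + x_τ·ξ − Q(ξ), and take the kernel K_z at parameters (τ, γ, x_τ). There exists δ ∈ (0, 1) such that for every δ₁ ∈ (0, δ) there are constants τ₀ > 0 and C > 0 with: Σ_{k=1}^{N} |K_z(ξ, u_{ℓ_k}(z))|² ≤ C·(log N)·e^{2·Re Φ_τ(ξ) + 0.9468·τ} for all ξ ∈ 𝒮₋(z), all integers N ≥ 2, all pairwise distinct integers ℓ₁, …, ℓ_N, all τ ≥ τ₀, and all z ∈ ℂ with 1 − δ ≤ |z| ≤ 1 − δ₁. -/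

import Mathlib

open MeasureTheory Filter Topology

noncomputable section

/-- θ_k(z) = −2·Arg z + 4πk. -/
def thetaK (z : ℂ) (k : ℤ) : ℝ := -(2 * Complex.arg z) + 4 * Real.pi * (k : ℝ)

/-- The Bethe roots u_k(z) = −(−2·log|z| + i·θ_k(z))^{1/2} (principal branch). -/
def uK (z : ℂ) (k : ℤ) : ℂ :=
  -((((-2 * Real.log (‖z‖) : ℝ) : ℂ) + Complex.I * ((thetaK z k : ℝ) : ℂ)) ^ ((1 : ℂ) / 2))

/-- Q(ξ) = −(1/π) ∫ℝ log(1 − e^{−ξ²/2} e^{−t²/2})/(i·t − ξ) dt. -/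
def Qf (ξ : ℂ) : ℂ :=
  -(1 / (Real.pi : ℂ)) *
    ∫ t : ℝ, Complex.log (1 - Complex.exp (-ξ ^ 2 / 2) * Complex.exp (-((t : ℂ) ^ 2) / 2)) /
      (Complex.I * (t : ℂ) - ξ)

/-- Φ(ξ) = −(τ/3)ξ³ + x·ξ − Q(ξ). -/
def PhiF (τ x : ℝ) (ξ : ℂ) : ℂ := -((τ : ℂ) / 3) * ξ ^ 3 + (x : ℂ) * ξ - Qf ξ

/-- The discrete kernel K_z. -/
def Kz (z : ℂ) (τ γ x : ℝ) (ξ₁ ξ₂ : ℂ) : ℂ :=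
  ∑' k : ℤ,
    Complex.exp (PhiF τ x ξ₁ + PhiF τ x (uK z k) + ((γ : ℂ) / 2) * (ξ₁ ^ 2 - (uK z k) ^ 2)) /
      (ξ₁ * uK z k * (ξ₁ + uK z k) * (uK z k + ξ₂))

/-- N-th term of the Fredholm series of K_z. -/
def fredTermK (z : ℂ) (τ γ x : ℝ) (N : ℕ) : ℂ :=
  ∑' ℓ : Fin N → ℤ,
    Matrix.det (Matrix.of (fun i j : Fin N => Kz z τ γ x (uK z (ℓ i)) (uK z (ℓ j))))

/-- The Fredholm determinant det(𝕀 − K_z). -/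
def fredDetK (z : ℂ) (τ γ x : ℝ) : ℂ :=
  1 + ∑' N : ℕ, ((-1 : ℂ) ^ (N + 1) / (Nat.factorial (N + 1) : ℂ)) * fredTermK z τ γ x (N + 1)

/-- Polylogarithm Li_s(w) = Σ_{k≥1} w^k/k^s. -/
def Li (s : ℝ) (w : ℂ) : ℂ := ∑' k : ℕ, w ^ (k + 1) / ((((k : ℝ) + 1) ^ s : ℝ) : ℂ)

def A1 (z : ℂ) : ℂ := -Li (3 / 2) z / (Real.sqrt (2 * Real.pi) : ℂ)

def A2 (z : ℂ) : ℂ := -Li (5 / 2) z / (Real.sqrt (2 * Real.pi) : ℂ)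

def Bf (z : ℂ) : ℂ :=
  (1 / (4 * (Real.pi : ℂ))) * ∫ t in (0 : ℝ)..1, (Li (1 / 2) ((t : ℂ) * z)) ^ 2 / (t : ℂ)

/-- The point z = R·e^{iθ}. -/
def circlePt (R θ : ℝ) : ℂ := (R : ℂ) * Complex.exp (Complex.I * (θ : ℂ))

/-- The limiting one-point distribution F(x; τ, γ) for step initial condition. -/
def Fstep (R τ γ x : ℝ) : ℂ :=
  (1 / (2 * (Real.pi : ℂ))) *
    ∫ θ in (0 : ℝ)..(2 * Real.pi),
      Complex.exp ((x : ℂ) * A1 (circlePt R θ) + (τ : ℂ) * A2 (circlePt R θ) +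
          2 * Bf (circlePt R θ)) * fredDetK (circlePt R θ) τ γ x

/-- x_τ = −τ + (π^{1/4}/√2)·𝗑·τ^{1/2}. -/
def xTau (x τ : ℝ) : ℝ := -τ + (Real.pi ^ ((1 : ℝ) / 4) / Real.sqrt 2) * x * Real.sqrt τ

/-- The trace Tr K_z = Σ_{k∈ℤ} K_z(u_k, u_k). -/
def trK (z : ℂ) (τ γ x : ℝ) : ℂ := ∑' k : ℤ, Kz z τ γ x (uK z k) (uK z k)


private lemma uK_sq {z : ℂ} {k : ℤ}
    (hs : 0 < -2 * Real.log (‖z‖)) :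
    (uK z k) ^ 2
      = (((-2 * Real.log (‖z‖) : ℝ) : ℂ) + Complex.I * ((thetaK z k : ℝ) : ℂ)) := by
  have hw0 : (((-2 * Real.log (‖z‖) : ℝ) : ℂ) + Complex.I * ((thetaK z k : ℝ) : ℂ)) ≠ 0 := by
    intro h
    have h2 := congrArg Complex.re h
    simp only [Complex.add_re, Complex.ofReal_re, Complex.mul_re, Complex.I_re, Complex.I_im,
      Complex.ofReal_im, Complex.zero_re] at h2
    linarith
  rw [uK, neg_sq, sq, ← Complex.cpow_add _ _ hw0]
  norm_num

private lemma uK_re_neg {z : ℂ} {k : ℤ}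
    (hs : 0 < -2 * Real.log (‖z‖)) :
    (uK z k).re < 0 := by
  have hw0 : (((-2 * Real.log (‖z‖) : ℝ) : ℂ) + Complex.I * ((thetaK z k : ℝ) : ℂ)) ≠ 0 := by
    intro h
    have h2 := congrArg Complex.re h
    simp only [Complex.add_re, Complex.ofReal_re, Complex.mul_re, Complex.I_re, Complex.I_im,
      Complex.ofReal_im, Complex.zero_re] at h2
    linarith
  have hwre : (((-2 * Real.log (‖z‖) : ℝ) : ℂ) + Complex.I * ((thetaK z k : ℝ) : ℂ)).re
      = -2 * Real.log (‖z‖) := by simp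
  rw [uK, Complex.neg_re, neg_lt, neg_zero]
  rw [Complex.cpow_def_of_ne_zero hw0, Complex.exp_re]
  apply mul_pos (Real.exp_pos _)
  apply Real.cos_pos_of_mem_Ioo
  have harg : |Complex.arg ((((-2 * Real.log (‖z‖) : ℝ) : ℂ) + Complex.I * ((thetaK z k : ℝ) : ℂ)))| < Real.pi / 2 :=
    Complex.abs_arg_lt_pi_div_two_iff.mpr (Or.inl (by rw [hwre]; linarith))
  have him : (Complex.log (((-2 * Real.log (‖z‖) : ℝ) : ℂ) + Complex.I * ((thetaK z k : ℝ) : ℂ)) * ((1:ℂ)/2)).im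
      = Complex.arg ((((-2 * Real.log (‖z‖) : ℝ) : ℂ) + Complex.I * ((thetaK z k : ℝ) : ℂ))) / 2 := by
    simp [Complex.mul_im, Complex.log_im]
    ring
  rw [him]
  have hpi := Real.pi_pos
  rw [abs_lt] at harg
  constructor <;> [linarith; linarith]


private lemma uK_rel {z : ℂ} {k : ℤ}
    (hs : 0 < -2 * Real.log (‖z‖)) :
    (uK z k).re ^ 2 - (uK z k).im ^ 2 = -2 * Real.log (‖z‖)
      ∧ 2 * ((uK z k).re * (uK z k).im) = thetaK z k
      ∧ ((uK z k) ^ 2).re = -2 * Real.log (‖z‖) := by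
  have h := uK_sq (z := z) (k := k) hs
  have hre := congrArg Complex.re h
  have him := congrArg Complex.im h
  simp only [sq, Complex.mul_re, Complex.mul_im, Complex.add_re, Complex.add_im,
    Complex.ofReal_re, Complex.ofReal_im, Complex.I_re, Complex.I_im] at hre him ⊢
  refine ⟨by linarith [hre], by linarith [him], by nlinarith [hre]⟩

private lemma clog_bound {c : ℂ} {d : ℝ} (hd : 0 < d) (hd1 : d < 1) (hc : ‖c‖ ≤ 1 - d) :
    ‖Complex.log (1 - c)‖ ≤ 3 / (2 * d) * ‖c‖ := by
  have h1 : ‖-c‖ < 1 := by rw [norm_neg]; linarith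
  have h := Complex.norm_log_one_add_le h1
  rw [norm_neg] at h
  rw [show (1 : ℂ) - c = 1 + -c by ring]
  refine h.trans ?_
  have hcn : 0 ≤ ‖c‖ := norm_nonneg c
  set cc := ‖c‖ with hcc
  have h2 : (1 - cc)⁻¹ ≤ d⁻¹ := by
    apply inv_anti₀ hd; linarith
  have hi : 0 < (1 - cc) := by linarith
  have hd' : 1 ≤ d⁻¹ := by
    rw [le_inv_comm₀ one_pos hd]; simpa using hd1.le
  have h3 : cc ^ 2 * (1 - cc)⁻¹ ≤ cc * d⁻¹ := by
    have h5 : cc ^ 2 ≤ cc * 1 := by nlinarith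
    calc cc ^ 2 * (1 - cc)⁻¹ ≤ (cc * 1) * d⁻¹ :=
          mul_le_mul h5 h2 (by positivity) (by positivity)
      _ = cc * d⁻¹ := by ring
  have h4 : cc ≤ cc * d⁻¹ := by nlinarith
  have he : 3 / (2 * d) * cc = (cc * d⁻¹) / 2 + cc * d⁻¹ := by
    field_simp; ring
  rw [he]
  linarith


private lemma Qf_bound {u : ℂ} {s d : ℝ} (hs : 0 < s) (hd : 0 < d) (hd1 : d < 1)
    (hu2re : (u ^ 2).re = s) (hure : u.re < 0) (habs : Real.exp (-s / 2) ≤ 1 - d) :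
    ‖Qf u‖ ≤ 2 / (d * (-u.re)) := by
  set p := -u.re with hp'
  have hp : 0 < p := by simp [hp']; linarith
  -- pointwise bound
  have hnorm_c : ∀ t : ℝ, ‖Complex.exp (-u ^ 2 / 2) * Complex.exp (-((t : ℂ) ^ 2) / 2)‖
      ≤ Real.exp (-s / 2) * Real.exp (-2⁻¹ * t ^ 2) := by
    intro t
    rw [norm_mul, Complex.norm_exp, Complex.norm_exp]
    have h1 : (-u ^ 2 / 2).re = -s / 2 := by
      rw [show (-u ^ 2 / 2 : ℂ) = -u ^ 2 / ((2:ℝ):ℂ) by norm_num]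
      rw [Complex.div_ofReal_re, Complex.neg_re, hu2re]
    have h2 : (-((t : ℂ) ^ 2) / 2).re = -2⁻¹ * t ^ 2 := by
      rw [show (-((t : ℂ) ^ 2) / 2 : ℂ) = ((-2⁻¹ * t ^ 2 : ℝ) : ℂ) by push_cast; ring]
      rw [Complex.ofReal_re]
    rw [h1, h2]
  have hptwise : ∀ t : ℝ,
      ‖Complex.log (1 - Complex.exp (-u ^ 2 / 2) * Complex.exp (-((t : ℂ) ^ 2) / 2)) /
        (Complex.I * (t : ℂ) - u)‖ ≤ 3 / (2 * d) * Real.exp (-2⁻¹ * t ^ 2) / p := by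
    intro t
    rw [norm_div]
    have het : Real.exp (-2⁻¹ * t ^ 2) ≤ 1 := by
      rw [Real.exp_le_one_iff]; nlinarith
    have hc : ‖Complex.exp (-u ^ 2 / 2) * Complex.exp (-((t : ℂ) ^ 2) / 2)‖ ≤ 1 - d := by
      refine (hnorm_c t).trans ?_
      nlinarith [Real.exp_pos (-s/2), Real.exp_pos (-2⁻¹ * t^2)]
    have hlog := clog_bound hd hd1 hc
    have hlog2 : ‖Complex.log (1 - Complex.exp (-u ^ 2 / 2) * Complex.exp (-((t : ℂ) ^ 2) / 2))‖
        ≤ 3 / (2 * d) * Real.exp (-2⁻¹ * t ^ 2) := by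
      refine hlog.trans ?_
      have := hnorm_c t
      have h3 : Real.exp (-s / 2) * Real.exp (-2⁻¹ * t ^ 2) ≤ Real.exp (-2⁻¹ * t ^ 2) := by
        nlinarith [Real.exp_pos (-2⁻¹ * t ^ 2)]
      have hdd : 0 < 3 / (2 * d) := by positivity
      nlinarith
    have hden : p ≤ ‖Complex.I * (t : ℂ) - u‖ := by
      have := Complex.abs_re_le_norm (Complex.I * (t : ℂ) - u)
      rw [Complex.sub_re, Complex.mul_re, Complex.I_re, Complex.I_im, Complex.ofReal_re,
        Complex.ofReal_im] at this
      have he : 0 * t - 1 * 0 - u.re = p := by simp [hp']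
      rw [he] at this
      exact (le_abs_self p).trans this
    exact div_le_div₀ (by positivity) hlog2 hp hden
  -- integrable dominating function
  have hint : Integrable (fun t : ℝ => 3 / (2 * d) * Real.exp (-2⁻¹ * t ^ 2) / p) := by
    exact ((integrable_exp_neg_mul_sq (by norm_num : (0:ℝ) < 2⁻¹)).const_mul _).div_const _
  have hQ : ‖Qf u‖ = 1 / Real.pi * ‖∫ t : ℝ, Complex.log
      (1 - Complex.exp (-u ^ 2 / 2) * Complex.exp (-((t : ℂ) ^ 2) / 2)) /
      (Complex.I * (t : ℂ) - u)‖ := by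
    rw [Qf, norm_mul]
    congr 1
    rw [norm_neg, norm_div, norm_one, Complex.norm_real, Real.norm_eq_abs,
      abs_of_pos Real.pi_pos]
  rw [hQ]
  have hIb := norm_integral_le_of_norm_le hint (Filter.Eventually.of_forall hptwise)
  have hIg : ∫ t : ℝ, 3 / (2 * d) * Real.exp (-2⁻¹ * t ^ 2) / p
      = 3 / (2 * d) * Real.sqrt (Real.pi / 2⁻¹) / p := by
    rw [integral_div, integral_const_mul, integral_gaussian]
  rw [hIg] at hIb
  have hsqrt : Real.sqrt (Real.pi / 2⁻¹) ≤ 2.6 := by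
    rw [show Real.pi / 2⁻¹ = 2 * Real.pi by ring]
    rw [Real.sqrt_le_iff]
    constructor
    · norm_num
    · nlinarith [Real.pi_lt_d2]
  have hpi := Real.pi_gt_three
  refine (mul_le_mul_of_nonneg_left hIb (by positivity)).trans ?_
  have hX : 0 ≤ Real.sqrt (Real.pi / 2⁻¹) := Real.sqrt_nonneg _
  rw [show (1:ℝ) / Real.pi * (3 / (2 * d) * Real.sqrt (Real.pi / 2⁻¹) / p)
      = 3 * Real.sqrt (Real.pi / 2⁻¹) / (2 * Real.pi * d * p) by field_simp]
  rw [div_le_div_iff₀ (by positivity) (by positivity)]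
  have hdp : 0 < d * p := mul_pos hd hp
  have k1 : Real.sqrt (Real.pi / 2⁻¹) * (d * p) ≤ 2.6 * (d * p) :=
    mul_le_mul_of_nonneg_right hsqrt hdp.le
  have k2 : 3 * (d * p) < Real.pi * (d * p) :=
    mul_lt_mul_of_pos_right Real.pi_gt_three hdp
  nlinarith [k1, k2, hdp]


private lemma sum_Icc_inv_le (N : ℕ) :
    ∑ i ∈ Finset.Icc (1 : ℤ) (N : ℤ), (1 : ℝ) / (i : ℝ) ≤ 1 + Real.log N := by
  have himg : Finset.Icc (1 : ℤ) (N : ℤ) = Finset.image (fun n : ℕ => (n : ℤ)) (Finset.Icc 1 N) := by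
    ext n
    simp only [Finset.mem_Icc, Finset.mem_image]
    constructor
    · intro ⟨h1, h2⟩
      exact ⟨n.toNat, by omega, by omega⟩
    · rintro ⟨a, ⟨h1, h2⟩, rfl⟩
      omega
  rw [himg, Finset.sum_image (by intro a _ b _ h; exact Nat.cast_injective h)]
  have : ∀ i ∈ Finset.Icc 1 N, (1 : ℝ) / ((i : ℤ) : ℝ) = ((((i : ℕ) : ℚ))⁻¹ : ℝ) := by
    intro i hi
    push_cast
    rw [one_div]
  rw [Finset.sum_congr rfl this]
  have := harmonic_le_one_add_log N
  rw [harmonic_eq_sum_Icc] at this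
  push_cast at this ⊢
  exact this

private lemma sum_inv_abs_int_le (N : ℕ) (hN : 2 ≤ N) (T : Finset ℤ) (hT : T.card ≤ N)
    (h0 : (0 : ℤ) ∉ T) :
    ∑ n ∈ T, (1 : ℝ) / |(n : ℝ)| ≤ 3 + 2 * Real.log N := by
  classical
  set U : Finset ℤ := (Finset.Icc (-(N : ℤ)) (N : ℤ)).erase 0 with hU'
  have hsplit := Finset.sum_sdiff (Finset.inter_subset_left : T ∩ U ⊆ T)
      (f := fun n : ℤ => (1 : ℝ) / |(n : ℝ)|)
  rw [Finset.sdiff_inter_self_left] at hsplit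
  rw [← hsplit]
  have hNpos : (0 : ℝ) < N := by positivity
  -- the part outside U
  have hout : ∑ n ∈ T \ U, (1 : ℝ) / |(n : ℝ)| ≤ 1 := by
    have hb : ∀ n ∈ T \ U, (1 : ℝ) / |(n : ℝ)| ≤ 1 / N := by
      intro n hn
      rw [Finset.mem_sdiff] at hn
      have hn0 : n ≠ 0 := by rintro rfl; exact h0 hn.1
      have : ¬(n ∈ U) := hn.2
      rw [hU', Finset.mem_erase, Finset.mem_Icc] at this
      have habs : (N : ℝ) ≤ |(n : ℝ)| := by
        have : n < -(N : ℤ) ∨ (N : ℤ) < n := by omega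
        rcases this with h | h
        · rw [abs_of_neg (by exact_mod_cast (by omega : n < 0))]
          have : (N : ℤ) ≤ -n := by omega
          exact_mod_cast this
        · rw [abs_of_pos (by exact_mod_cast (by omega : 0 < n))]
          exact_mod_cast h.le
      exact one_div_le_one_div_of_le hNpos habs
    calc ∑ n ∈ T \ U, (1 : ℝ) / |(n : ℝ)| ≤ ∑ n ∈ T \ U, (1 : ℝ) / N :=
          Finset.sum_le_sum hb
      _ = (T \ U).card * (1 / N) := by rw [Finset.sum_const, nsmul_eq_mul]
      _ ≤ N * (1 / N) := by
          apply mul_le_mul_of_nonneg_right ?_ (by positivity)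
          have : (T \ U).card ≤ T.card := Finset.card_le_card (Finset.sdiff_subset)
          exact_mod_cast this.trans hT
      _ = 1 := by field_simp
  -- the part inside U
  have hin : ∑ n ∈ T ∩ U, (1 : ℝ) / |(n : ℝ)| ≤ 2 * (1 + Real.log N) := by
    have hsub : ∑ n ∈ T ∩ U, (1 : ℝ) / |(n : ℝ)| ≤ ∑ n ∈ U, (1 : ℝ) / |(n : ℝ)| :=
      Finset.sum_le_sum_of_subset_of_nonneg Finset.inter_subset_right
        (fun i _ _ => by positivity)
    refine hsub.trans ?_
    have hUeq : U = Finset.Icc (-(N : ℤ)) (-1) ∪ Finset.Icc 1 (N : ℤ) := by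
      ext n
      simp only [hU', Finset.mem_erase, Finset.mem_Icc, Finset.mem_union]
      omega
    have hdisj : Disjoint (Finset.Icc (-(N : ℤ)) (-1)) (Finset.Icc 1 (N : ℤ)) := by
      rw [Finset.disjoint_left]
      intro a ha hb
      rw [Finset.mem_Icc] at ha hb
      omega
    rw [hUeq, Finset.sum_union hdisj]
    have hneg : Finset.Icc (-(N : ℤ)) (-1) = Finset.image (fun i : ℤ => -i) (Finset.Icc 1 (N : ℤ)) := by
      ext n
      simp only [Finset.mem_Icc, Finset.mem_image]
      constructor
      · intro h; exact ⟨-n, by omega, by omega⟩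
      · rintro ⟨a, ha, rfl⟩; omega
    rw [hneg, Finset.sum_image (by intro a _ b _ h; exact neg_injective h)]
    have h1 : ∀ i ∈ Finset.Icc (1 : ℤ) (N : ℤ), (1 : ℝ) / |((-i : ℤ) : ℝ)| = 1 / (i : ℝ) := by
      intro i hi
      rw [Finset.mem_Icc] at hi
      push_cast
      rw [abs_neg, abs_of_pos (by exact_mod_cast (by omega : (0:ℤ) < i))]
    have h2 : ∀ i ∈ Finset.Icc (1 : ℤ) (N : ℤ), (1 : ℝ) / |(i : ℝ)| = 1 / (i : ℝ) := by
      intro i hi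
      rw [Finset.mem_Icc] at hi
      rw [abs_of_pos (by exact_mod_cast (by omega : (0:ℤ) < i))]
    rw [Finset.sum_congr rfl h1, Finset.sum_congr rfl h2]
    have := sum_Icc_inv_le N
    linarith
  linarith


private lemma exp_le_of_sqrt (y : ℝ) (hy : 1 ≤ y) : Real.exp (-y) ≤ 120 / y ^ 5 := by
  have h5 : y ^ 5 / 120 ≤ Real.exp y := by
    have hsum := Real.sum_le_exp_of_nonneg (by linarith : (0:ℝ) ≤ y) 6
    have hterm : y ^ 5 / (Nat.factorial 5) ≤ ∑ i ∈ Finset.range 6, y ^ i / (Nat.factorial i) := by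
      exact Finset.single_le_sum (f := fun i => y ^ i / (Nat.factorial i))
        (fun i _ => by positivity) (Finset.self_mem_range_succ 5)
    have : (Nat.factorial 5 : ℝ) = 120 := by norm_num [Nat.factorial]
    rw [this] at hterm
    linarith
  rw [Real.exp_neg, inv_le_comm₀ (Real.exp_pos y) (by positivity), inv_div]
  exact h5

private lemma summable_exp_sqrt_nat :
    Summable (fun n : ℕ => Real.exp (-Real.sqrt (Real.pi * n))) := by
  rw [← summable_nat_add_iff 1]
  have hb : Summable (fun n : ℕ => 14 * (1 / ((n : ℝ) + 1) ^ 2)) := by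
    have h := (summable_nat_add_iff (f := fun n : ℕ => 1 / (n : ℝ) ^ 2) 1).mpr
      (Real.summable_one_div_nat_pow.mpr one_lt_two)
    have h2 : (fun n : ℕ => 1 / ((n : ℝ) + 1) ^ 2) = (fun n : ℕ => 1 / ((n + 1 : ℕ) : ℝ) ^ 2) := by
      funext n; push_cast; ring_nf
    exact (h2 ▸ h).mul_left 14
  refine Summable.of_nonneg_of_le (fun n => (Real.exp_pos _).le) (fun n => ?_) hb
  set y := Real.sqrt (Real.pi * (n + 1 : ℕ)) with hy'
  have hyy : y ^ 2 = Real.pi * (n + 1 : ℕ) := Real.sq_sqrt (by positivity)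
  have hy3 : 3 * ((n : ℝ) + 1) ≤ y ^ 2 := by
    rw [hyy]; push_cast
    nlinarith [Real.pi_gt_three]
  have hy1 : 1 ≤ y := by
    nlinarith [Real.sqrt_nonneg (Real.pi * (n + 1 : ℕ))]
  refine (exp_le_of_sqrt y hy1).trans ?_
  have h9 : 9 * ((n : ℝ) + 1) ^ 2 ≤ y ^ 4 := by nlinarith [sq_nonneg ((n:ℝ)+1)]
  have hy5 : 9 * ((n : ℝ) + 1) ^ 2 ≤ y ^ 5 := by
    calc 9 * ((n : ℝ) + 1) ^ 2 ≤ y ^ 4 := h9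
      _ ≤ y ^ 5 := by nlinarith [pow_nonneg (by linarith : (0:ℝ) ≤ y) 4]
  have hd : (0:ℝ) < 14 / ((n:ℝ)+1)^2 := by positivity
  have hk := mul_le_mul_of_nonneg_left hy5 hd.le
  have he : 14 / ((n:ℝ)+1)^2 * (9*((n:ℝ)+1)^2) = 126 := by field_simp; ring
  rw [he] at hk
  have hy5pos : (0:ℝ) < y ^ 5 := by positivity
  rw [div_le_iff₀ hy5pos]
  calc (120:ℝ) ≤ 126 := by norm_num
    _ ≤ 14 / ((n:ℝ)+1)^2 * y ^ 5 := hk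
    _ = 14 * (1/((n:ℝ)+1)^2) * y ^ 5 := by ring

private lemma summable_S0 :
    Summable (fun m : ℤ => Real.exp (-Real.sqrt (Real.pi * |(m : ℝ)|))) := by
  apply Summable.of_nat_of_neg
  · have := summable_exp_sqrt_nat
    refine this.congr fun n => ?_
    norm_num
  · have := summable_exp_sqrt_nat
    refine this.congr fun n => ?_
    rw [show ((-(n : ℤ) : ℤ) : ℝ) = -(n : ℝ) by push_cast; ring, abs_neg]
    norm_num


private lemma PhiF_re (τ x : ℝ) (u : ℂ) :
    (PhiF τ x u).re = -(τ / 3) * (u.re ^ 3 - 3 * u.re * u.im ^ 2) + x * u.re - (Qf u).re := by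
  rw [PhiF, Complex.sub_re, Complex.add_re]
  congr 2
  · have h1 : -((τ : ℂ) / 3) = ((-(τ / 3) : ℝ) : ℂ) := by push_cast; ring
    rw [h1, Complex.re_ofReal_mul]
    congr 1
    rw [pow_succ, pow_two]
    simp [Complex.mul_re, Complex.mul_im]
    ring
  · rw [Complex.re_ofReal_mul]

private lemma thetaK_abs_ge (z : ℂ) (k : ℤ) :
    2 * Real.pi * |(k : ℝ)| ≤ |thetaK z k| := by
  rcases eq_or_ne k 0 with rfl | hk
  · simp [abs_nonneg]
  · have hpi := Real.pi_pos
    have harg1 := Complex.arg_le_pi z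
    have harg2 := Complex.neg_pi_lt_arg z
    have h1 : |4 * Real.pi * (k : ℝ)| - |2 * Complex.arg z| ≤ |thetaK z k| := by
      have := abs_sub_abs_le_abs_sub (4 * Real.pi * (k : ℝ)) (2 * Complex.arg z)
      refine this.trans (le_of_eq ?_)
      rw [thetaK]
      ring_nf
    have h2 : |4 * Real.pi * (k : ℝ)| = 4 * Real.pi * |(k : ℝ)| := by
      rw [abs_mul, abs_of_pos (by positivity : (0:ℝ) < 4 * Real.pi)]
    have h3 : |2 * Complex.arg z| ≤ 2 * Real.pi := by
      rw [abs_mul, abs_of_pos (by norm_num : (0:ℝ) < 2)]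
      have : |Complex.arg z| ≤ Real.pi := abs_le.mpr ⟨harg2.le, harg1⟩
      linarith
    have hk1 : (1 : ℝ) ≤ |(k : ℝ)| := by
      rw [show |(k : ℝ)| = ((|k| : ℤ) : ℝ) by rw [Int.cast_abs]]
      exact_mod_cast Int.one_le_abs (by omega)
    nlinarith

private lemma cubic_bound (p : ℝ) (hp : 0 ≤ p) : 1.001 * p - 2 / 3 * p ^ 3 ≤ 0.4722 := by
  nlinarith [sq_nonneg (p - 0.7075), mul_nonneg (sq_nonneg (p - 0.7075)) hp, sq_nonneg p]

private lemma phase_bound {c0X τ s p : ℝ} (hc : 0 ≤ c0X)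
    (hτ : max 1 ((2000 * (c0X + 1)) ^ 2) ≤ τ) (hs : 0 < s) (hs2 : s ≤ 0.0005) (hp : 0 ≤ p) :
    τ * (p * s - 2 / 3 * p ^ 3 + p) + c0X * Real.sqrt τ * p + p ≤ 0.4722 * τ := by
  have hτ1 : (1 : ℝ) ≤ τ := le_trans (le_max_left _ _) hτ
  have hτpos : 0 < τ := by linarith
  have hsq : 2000 * (c0X + 1) ≤ Real.sqrt τ := by
    rw [show (2000 : ℝ) * (c0X + 1) = Real.sqrt ((2000 * (c0X + 1)) ^ 2) by
      rw [Real.sqrt_sq (by positivity)]]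
    exact Real.sqrt_le_sqrt (le_trans (le_max_right _ _) hτ)
  have hone : 1 ≤ Real.sqrt τ := by
    rw [show (1:ℝ) = Real.sqrt 1 by simp]
    exact Real.sqrt_le_sqrt hτ1
  have hss : Real.sqrt τ * Real.sqrt τ = τ := Real.mul_self_sqrt (by linarith)
  -- (c0X * sqrt τ + 1) * p ≤ 0.0005 * τ * p
  have key : c0X * Real.sqrt τ + 1 ≤ 0.0005 * τ := by
    have h1 : c0X * Real.sqrt τ + 1 ≤ (c0X + 1) * Real.sqrt τ := by nlinarith
    have h2 : (c0X + 1) * Real.sqrt τ ≤ (Real.sqrt τ / 2000) * Real.sqrt τ := by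
      apply mul_le_mul_of_nonneg_right ?_ (by positivity)
      linarith
    rw [mul_comm] at h2
    nlinarith
  have key2 : (c0X * Real.sqrt τ + 1) * p ≤ 0.0005 * τ * p :=
    mul_le_mul_of_nonneg_right key hp
  have hps : τ * (p * s) ≤ τ * (0.0005 * p) := by
    apply mul_le_mul_of_nonneg_left ?_ hτpos.le
    nlinarith
  have hcube := cubic_bound p hp
  nlinarith [mul_le_mul_of_nonneg_left hcube hτpos.le]


private lemma s_facts {δ₁ : ℝ} (hδ₁ : 0 < δ₁) (hδ₁' : δ₁ < 1/10000) {z : ℂ}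
    (hz1 : 1 - (1/10000 : ℝ) ≤ ‖z‖) (hz2 : ‖z‖ ≤ 1 - δ₁) :
    0 < -2 * Real.log (‖z‖) ∧ -2 * Real.log (‖z‖) ≤ 0.0005 ∧
      0 < -2 * Real.log (1 - δ₁) ∧ -2 * Real.log (1 - δ₁) ≤ -2 * Real.log (‖z‖) := by
  have habs0 : (0 : ℝ) < ‖z‖ := by linarith
  have h1δ : (0 : ℝ) < 1 - δ₁ := by linarith
  have hlt1 : ‖z‖ < 1 := by linarith
  have hlogz : Real.log (‖z‖) < 0 := Real.log_neg habs0 hlt1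
  have hlog1 : Real.log (1 - δ₁) < 0 := Real.log_neg h1δ (by linarith)
  have hmono : Real.log (‖z‖) ≤ Real.log (1 - δ₁) := Real.log_le_log habs0 hz2
  refine ⟨by linarith, ?_, by linarith, by linarith⟩
  have hexp : Real.exp (-0.00025) ≤ ‖z‖ := by
    have h1 : (0.00025 : ℝ) + 1 ≤ Real.exp 0.00025 := Real.add_one_le_exp 0.00025
    have h2 : Real.exp (-0.00025) ≤ ((0.00025 : ℝ) + 1)⁻¹ := by
      rw [Real.exp_neg]
      exact inv_anti₀ (by norm_num) h1
    refine h2.trans (le_trans ?_ hz1)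
    rw [inv_le_comm₀ (by norm_num) (by norm_num)]
    norm_num
  have := (Real.le_log_iff_exp_le habs0).mpr hexp
  linarith

private lemma root_facts {z : ℂ} (hs : 0 < -2 * Real.log (‖z‖)) (k : ℤ) :
    0 < -(uK z k).re
    ∧ Real.sqrt (-2 * Real.log (‖z‖)) ≤ -(uK z k).re
    ∧ -(uK z k).re ≤ ‖uK z k‖
    ∧ Real.sqrt (Real.pi * |(k : ℝ)|) ≤ -(uK z k).re
    ∧ ((uK z k) ^ 2).re = -2 * Real.log (‖z‖) := by
  obtain ⟨h1, h2, h3⟩ := uK_rel (z := z) (k := k) hs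
  have hneg := uK_re_neg (z := z) (k := k) hs
  have hp : 0 < -(uK z k).re := by linarith
  set a := (uK z k).re with ha
  set b := (uK z k).im with hb
  have hps : -2 * Real.log (‖z‖) ≤ (-a) ^ 2 := by nlinarith [sq_nonneg b]
  have hsq : Real.sqrt (-2 * Real.log (‖z‖)) ≤ -a := by
    rw [show -a = Real.sqrt ((-a) ^ 2) by rw [Real.sqrt_sq hp.le]]
    exact Real.sqrt_le_sqrt hps
  have habs : -a ≤ ‖uK z k‖ := by
    calc -a = |a| := (abs_of_neg hneg).symm
      _ ≤ _ := Complex.abs_re_le_norm _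
  have hθ := thetaK_abs_ge z k
  have h2ab : |2 * (a * b)| ≤ a ^ 2 + b ^ 2 :=
    abs_le.mpr ⟨by nlinarith [sq_nonneg (a + b)], by nlinarith [sq_nonneg (a - b)]⟩
  have hpk2 : Real.pi * |(k : ℝ)| ≤ (-a) ^ 2 := by
    rw [h2] at h2ab
    nlinarith
  have hpk : Real.sqrt (Real.pi * |(k : ℝ)|) ≤ -a := by
    rw [show -a = Real.sqrt ((-a) ^ 2) by rw [Real.sqrt_sq hp.le]]
    exact Real.sqrt_le_sqrt hpk2
  exact ⟨hp, hsq, habs, hpk, h3⟩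

private lemma PhiF_uK_le (x : ℝ) {δ₁ τ : ℝ} (hδ₁ : 0 < δ₁) (hδ₁' : δ₁ < 1/10000)
    (hτ : max 1 ((2000 * ((Real.pi ^ ((1:ℝ)/4) / Real.sqrt 2) * |x| + 1)) ^ 2) ≤ τ)
    {z : ℂ} (hz1 : 1 - (1/10000 : ℝ) ≤ ‖z‖) (hz2 : ‖z‖ ≤ 1 - δ₁) (m : ℤ) :
    (PhiF τ (xTau x τ) (uK z m)).re ≤
      0.4722 * τ - (-(uK z m).re) + 2 / (δ₁ * Real.sqrt (-2 * Real.log (1 - δ₁))) := by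
  obtain ⟨hs, hs2, hs1, hs1s⟩ := s_facts hδ₁ hδ₁' hz1 hz2
  obtain ⟨hp, hsq, habs, hpk, h2re⟩ := root_facts hs m
  obtain ⟨h1, h2, -⟩ := uK_rel (z := z) (k := m) hs
  set a := (uK z m).re with ha
  set b := (uK z m).im with hb'
  set p : ℝ := -a with hpdef
  set s : ℝ := -2 * Real.log (‖z‖) with hsdef
  set s₁ : ℝ := -2 * Real.log (1 - δ₁) with hs1def
  have hures : (uK z m).re < 0 := by linarith
  have habs0 : (0 : ℝ) < ‖z‖ := by linarith
  -- Q bound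
  have hQ : ‖Qf (uK z m)‖ ≤ 2 / (δ₁ * p) := by
    apply Qf_bound hs hδ₁ (by linarith : δ₁ < 1) h2re hures
    rw [show -s / 2 = Real.log (‖z‖) by rw [hsdef]; ring, Real.exp_log habs0]
    exact hz2
  have hsq1 : Real.sqrt s₁ ≤ p := le_trans (Real.sqrt_le_sqrt hs1s) hsq
  have hs1sqrt : 0 < Real.sqrt s₁ := Real.sqrt_pos.mpr hs1
  have hQ2 : -((Qf (uK z m)).re) ≤ 2 / (δ₁ * Real.sqrt s₁) := by
    have hre : |(Qf (uK z m)).re| ≤ ‖Qf (uK z m)‖ := by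
      exact Complex.abs_re_le_norm _
    have h5 : 2 / (δ₁ * p) ≤ 2 / (δ₁ * Real.sqrt s₁) := by
      apply div_le_div_of_nonneg_left (by norm_num) (by positivity)
      exact mul_le_mul_of_nonneg_left hsq1 hδ₁.le
    have := neg_le_abs ((Qf (uK z m)).re)
    linarith
  -- real part computation
  have hb2 : b ^ 2 = a ^ 2 - s := by linarith
  have hrePhi : (PhiF τ (xTau x τ) (uK z m)).re
      = τ * (p * s) - 2/3 * τ * p ^ 3 + τ * p - (Real.pi ^ ((1:ℝ)/4) / Real.sqrt 2) * x * Real.sqrt τ * p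
        - (Qf (uK z m)).re := by
    rw [PhiF_re, xTau]
    rw [← ha, ← hb', hb2]
    rw [show a = -p by rw [hpdef]; ring]
    ring
  set c0 : ℝ := Real.pi ^ ((1:ℝ)/4) / Real.sqrt 2 with hc0def
  have hc0 : 0 ≤ c0 := by
    apply div_nonneg ?_ (Real.sqrt_nonneg 2)
    exact Real.rpow_nonneg Real.pi_pos.le _
  have hτ' : max 1 ((2000 * (c0 * |x| + 1)) ^ 2) ≤ τ := hτ
  have hphase := phase_bound (mul_nonneg hc0 (abs_nonneg x)) hτ' hs hs2 hp.le
  have hxabs : -(c0 * x * Real.sqrt τ * p) ≤ c0 * |x| * Real.sqrt τ * p := by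
    have h6 : -x ≤ |x| := neg_le_abs x
    have : 0 ≤ c0 * Real.sqrt τ * p := by positivity
    nlinarith [this]
  have hph2 : τ * (p * s - 2 / 3 * p ^ 3 + p) = τ * (p * s) - 2/3 * τ * p ^ 3 + τ * p := by ring
  rw [hrePhi]
  have hfin := hphase
  rw [hph2] at hfin
  clear_value a b p s s₁ c0
  linarith [hfin, hxabs, hQ2]

private lemma Kz_abs_le (x γ : ℝ) {δ₁ τ : ℝ} (hδ₁ : 0 < δ₁) (hδ₁' : δ₁ < 1/10000)
    (hτ : max 1 ((2000 * ((Real.pi ^ ((1:ℝ)/4) / Real.sqrt 2) * |x| + 1)) ^ 2) ≤ τ)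
    {z : ℂ} (hz1 : 1 - (1/10000 : ℝ) ≤ ‖z‖) (hz2 : ‖z‖ ≤ 1 - δ₁)
    (j l : ℤ) :
    ‖Kz z τ γ (xTau x τ) (uK z j) (uK z l)‖ ≤
      Real.exp ((PhiF τ (xTau x τ) (uK z j)).re)
        * (Real.exp (0.4722 * τ + 2 / (δ₁ * Real.sqrt (-2 * Real.log (1 - δ₁))))
          * (∑' m : ℤ, Real.exp (-Real.sqrt (Real.pi * |(m : ℝ)|))))
        / (2 * (-2 * Real.log (1 - δ₁)) * Real.sqrt (-2 * Real.log (1 - δ₁)) * (-(uK z l).re)) := by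
  obtain ⟨hs, hs2, hs1, hs1s⟩ := s_facts hδ₁ hδ₁' hz1 hz2
  set s₁ : ℝ := -2 * Real.log (1 - δ₁) with hs1def
  set CQ : ℝ := 2 / (δ₁ * Real.sqrt s₁) with hCQdef
  have hRF := fun k : ℤ => root_facts hs k
  obtain ⟨hpj, hsqj, habsj, -, h2rej⟩ := hRF j
  obtain ⟨hpl, hsql, habsl, -, h2rel⟩ := hRF l
  have hsq1 : ∀ k : ℤ, Real.sqrt s₁ ≤ -(uK z k).re := fun k =>
    le_trans (Real.sqrt_le_sqrt hs1s) (hRF k).2.1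
  have hs1rt : 0 < Real.sqrt s₁ := Real.sqrt_pos.mpr hs1
  set D : ℝ := 2 * s₁ * Real.sqrt s₁ * (-(uK z l).re) with hDdef
  have hD : 0 < D := by
    rw [hDdef]
    have := hsq1 l
    apply mul_pos (by positivity)
    linarith [hs1rt]
  set A : ℝ := Real.exp ((PhiF τ (xTau x τ) (uK z j)).re) * Real.exp (0.4722 * τ + CQ) / D
    with hAdef
  have hterm : ∀ m : ℤ,
      ‖Complex.exp (PhiF τ (xTau x τ) (uK z j) + PhiF τ (xTau x τ) (uK z m)
          + ((γ : ℂ) / 2) * ((uK z j) ^ 2 - (uK z m) ^ 2)) /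
        ((uK z j) * uK z m * ((uK z j) + uK z m) * (uK z m + uK z l))‖
      ≤ A * Real.exp (-Real.sqrt (Real.pi * |(m : ℝ)|)) := by
    intro m
    obtain ⟨hpm, hsqm, habsm, hpkm, h2rem⟩ := hRF m
    have hsq1m := hsq1 m
    have hsq1j := hsq1 j
    have hsq1l := hsq1 l
    rw [norm_div, Complex.norm_exp]
    -- real part of the exponent
    have hre0 : (((γ : ℂ) / 2) * ((uK z j) ^ 2 - (uK z m) ^ 2)).re = 0 := by
      rw [show ((γ : ℂ) / 2) = ((γ / 2 : ℝ) : ℂ) by push_cast; ring, Complex.re_ofReal_mul,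
        Complex.sub_re, h2rej, h2rem]
      ring
    have hre : (PhiF τ (xTau x τ) (uK z j) + PhiF τ (xTau x τ) (uK z m)
        + ((γ : ℂ) / 2) * ((uK z j) ^ 2 - (uK z m) ^ 2)).re
        = (PhiF τ (xTau x τ) (uK z j)).re + (PhiF τ (xTau x τ) (uK z m)).re := by
      rw [Complex.add_re, Complex.add_re, hre0, add_zero]
    rw [hre]
    -- denominator lower bound
    have habs_den : D ≤ ‖(uK z j) * uK z m * ((uK z j) + uK z m) * (uK z m + uK z l)‖ := by
      rw [norm_mul, norm_mul, norm_mul]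
      have h1 : Real.sqrt s₁ + Real.sqrt s₁ ≤ ‖(uK z j) + uK z m‖ := by
        have hrs : ((uK z j) + uK z m).re = (uK z j).re + (uK z m).re := Complex.add_re _ _
        have habs' := Complex.abs_re_le_norm ((uK z j) + uK z m)
        rw [hrs, abs_of_neg (by linarith : (uK z j).re + (uK z m).re < 0)] at habs'
        linarith
      have h2 : -(uK z l).re ≤ ‖uK z m + uK z l‖ := by
        have hrs : (uK z m + uK z l).re = (uK z m).re + (uK z l).re := Complex.add_re _ _
        have habs' := Complex.abs_re_le_norm (uK z m + uK z l)
        rw [hrs, abs_of_neg (by linarith : (uK z m).re + (uK z l).re < 0)] at habs'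
        linarith
      have h3 : Real.sqrt s₁ ≤ ‖uK z j‖ := le_trans hsq1j habsj
      have h4 : Real.sqrt s₁ ≤ ‖uK z m‖ := le_trans hsq1m habsm
      have hss : Real.sqrt s₁ * Real.sqrt s₁ = s₁ := Real.mul_self_sqrt hs1.le
      calc D = (Real.sqrt s₁ * Real.sqrt s₁) * (Real.sqrt s₁ + Real.sqrt s₁) * (-(uK z l).re) := by
            rw [hss, hDdef]; ring
        _ ≤ ‖uK z j‖ * ‖uK z m‖ * ‖(uK z j) + uK z m‖
              * ‖uK z m + uK z l‖ := by
            have : 0 < -(uK z l).re := hpl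
            apply mul_le_mul ?_ h2 this.le (by positivity)
            apply mul_le_mul (mul_le_mul h3 h4 hs1rt.le (norm_nonneg _)) h1
              (by positivity) (by positivity)
    -- numerator upper bound
    have hnum : Real.exp ((PhiF τ (xTau x τ) (uK z j)).re + (PhiF τ (xTau x τ) (uK z m)).re)
        ≤ Real.exp ((PhiF τ (xTau x τ) (uK z j)).re) * Real.exp (0.4722 * τ + CQ)
            * Real.exp (-Real.sqrt (Real.pi * |(m : ℝ)|)) := by
      have hPm := PhiF_uK_le x hδ₁ hδ₁' hτ hz1 hz2 m
      rw [← hs1def, ← hCQdef] at hPm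
      have hinner : Real.exp ((PhiF τ (xTau x τ) (uK z m)).re)
          ≤ Real.exp (0.4722 * τ + CQ) * Real.exp (-Real.sqrt (Real.pi * |(m : ℝ)|)) := by
        rw [← Real.exp_add]
        exact Real.exp_le_exp.mpr (by linarith [hpkm])
      calc Real.exp ((PhiF τ (xTau x τ) (uK z j)).re + (PhiF τ (xTau x τ) (uK z m)).re)
          = Real.exp ((PhiF τ (xTau x τ) (uK z j)).re)
            * Real.exp ((PhiF τ (xTau x τ) (uK z m)).re) := Real.exp_add _ _
        _ ≤ Real.exp ((PhiF τ (xTau x τ) (uK z j)).re)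
            * (Real.exp (0.4722 * τ + CQ) * Real.exp (-Real.sqrt (Real.pi * |(m : ℝ)|))) :=
            mul_le_mul_of_nonneg_left hinner (Real.exp_pos _).le
        _ = Real.exp ((PhiF τ (xTau x τ) (uK z j)).re) * Real.exp (0.4722 * τ + CQ)
            * Real.exp (-Real.sqrt (Real.pi * |(m : ℝ)|)) := (mul_assoc _ _ _).symm
    calc Real.exp ((PhiF τ (xTau x τ) (uK z j)).re + (PhiF τ (xTau x τ) (uK z m)).re) /
          ‖(uK z j) * uK z m * ((uK z j) + uK z m) * (uK z m + uK z l)‖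
        ≤ (Real.exp ((PhiF τ (xTau x τ) (uK z j)).re) * Real.exp (0.4722 * τ + CQ)
            * Real.exp (-Real.sqrt (Real.pi * |(m : ℝ)|))) / D :=
          div_le_div₀ (by positivity) hnum hD habs_den
      _ = A * Real.exp (-Real.sqrt (Real.pi * |(m : ℝ)|)) := by rw [hAdef]; ring
  -- sum up
  have hgs : Summable (fun m : ℤ => A * Real.exp (-Real.sqrt (Real.pi * |(m : ℝ)|))) :=
    summable_S0.mul_left A
  have hsn : Summable (fun m : ℤ =>
      ‖Complex.exp (PhiF τ (xTau x τ) (uK z j) + PhiF τ (xTau x τ) (uK z m)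
          + ((γ : ℂ) / 2) * ((uK z j) ^ 2 - (uK z m) ^ 2)) /
        ((uK z j) * uK z m * ((uK z j) + uK z m) * (uK z m + uK z l))‖) :=
    Summable.of_nonneg_of_le (fun m => norm_nonneg _) hterm hgs
  rw [Kz]
  calc ‖∑' m : ℤ, Complex.exp (PhiF τ (xTau x τ) (uK z j) + PhiF τ (xTau x τ) (uK z m)
          + ((γ : ℂ) / 2) * ((uK z j) ^ 2 - (uK z m) ^ 2)) /
        ((uK z j) * uK z m * ((uK z j) + uK z m) * (uK z m + uK z l))‖
      ≤ ∑' m : ℤ, ‖Complex.exp (PhiF τ (xTau x τ) (uK z j) + PhiF τ (xTau x τ) (uK z m)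
          + ((γ : ℂ) / 2) * ((uK z j) ^ 2 - (uK z m) ^ 2)) /
        ((uK z j) * uK z m * ((uK z j) + uK z m) * (uK z m + uK z l))‖ :=
        norm_tsum_le_tsum_norm hsn
    _ ≤ ∑' m : ℤ, A * Real.exp (-Real.sqrt (Real.pi * |(m : ℝ)|)) :=
        Summable.tsum_le_tsum hterm hsn hgs
    _ = A * ∑' m : ℤ, Real.exp (-Real.sqrt (Real.pi * |(m : ℝ)|)) := tsum_mul_left
    _ = Real.exp ((PhiF τ (xTau x τ) (uK z j)).re)
        * (Real.exp (0.4722 * τ + CQ)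
          * (∑' m : ℤ, Real.exp (-Real.sqrt (Real.pi * |(m : ℝ)|)))) / D := by
        rw [hAdef]; ring

set_option maxHeartbeats 1000000 in
theorem statement13 (x γ : ℝ) :
    ∃ δ ∈ Set.Ioo (0 : ℝ) 1, ∀ δ₁ ∈ Set.Ioo (0 : ℝ) δ, ∃ τ₀ > (0 : ℝ), ∃ C > (0 : ℝ),
      ∀ N : ℕ, 2 ≤ N → ∀ ℓ : Fin N → ℤ, Function.Injective ℓ →
        ∀ j : ℤ, ∀ τ : ℝ, τ₀ ≤ τ → ∀ z : ℂ, 1 - δ ≤ ‖z‖ → ‖z‖ ≤ 1 - δ₁ →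
          ∑ k : Fin N, ‖Kz z τ γ (xTau x τ) (uK z j) (uK z (ℓ k))‖ ^ 2 ≤
            C * Real.log (N : ℝ) *
              Real.exp (2 * (PhiF τ (xTau x τ) (uK z j)).re + 0.9468 * τ) := by
  refine ⟨1/10000, by norm_num, ?_⟩
  intro δ₁ hδ₁mem
  rw [Set.mem_Ioo] at hδ₁mem
  obtain ⟨hδ₁, hδ₁'⟩ := hδ₁mem
  have hlog2 : 0 < Real.log 2 := Real.log_pos (by norm_num)
  set s₁ : ℝ := -2 * Real.log (1 - δ₁) with hs1def
  have hs1 : 0 < s₁ := by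
    have : Real.log (1 - δ₁) < 0 := Real.log_neg (by linarith) (by linarith)
    rw [hs1def]; linarith
  set CQ : ℝ := 2 / (δ₁ * Real.sqrt s₁) with hCQdef
  have hCQ : 0 < CQ := by
    rw [hCQdef]
    have : 0 < Real.sqrt s₁ := Real.sqrt_pos.mpr hs1
    positivity
  set S0 : ℝ := ∑' m : ℤ, Real.exp (-Real.sqrt (Real.pi * |(m : ℝ)|)) with hS0def
  have hS0 : 0 ≤ S0 := tsum_nonneg fun m => (Real.exp_pos _).le
  set c4 : ℝ := (1 / s₁ + 3) / Real.log 2 + 2 with hc4def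
  have hc4 : 0 < c4 := by
    have h1 : 0 ≤ (1 / s₁ + 3) / Real.log 2 := div_nonneg (by positivity) hlog2.le
    rw [hc4def]; linarith
  set C : ℝ := Real.exp (2 * CQ) * S0 ^ 2 / (4 * s₁ ^ 3) * c4 + 1 with hCdef
  have hC : 0 < C := by
    have h1 : 0 ≤ Real.exp (2 * CQ) * S0 ^ 2 / (4 * s₁ ^ 3) := by positivity
    have h2 := mul_nonneg h1 hc4.le
    rw [hCdef]; linarith
  set τ₀ : ℝ := max 1 ((2000 * ((Real.pi ^ ((1:ℝ)/4) / Real.sqrt 2) * |x| + 1)) ^ 2) with hτ₀def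
  refine ⟨τ₀, lt_of_lt_of_le one_pos (le_max_left _ _), C, hC, ?_⟩
  intro N hN ℓ hℓ j τ hτ z hz1 hz2
  have hτmax : max 1 ((2000 * ((Real.pi ^ ((1:ℝ)/4) / Real.sqrt 2) * |x| + 1)) ^ 2) ≤ τ := by
    rw [← hτ₀def]; exact hτ
  have hτ1 : (1 : ℝ) ≤ τ := le_trans (le_max_left _ _) hτmax
  obtain ⟨hs, hs2, hs1'', hs1s⟩ := s_facts hδ₁ hδ₁' hz1 hz2
  rw [← hs1def] at hs1s
  set P : ℝ := (PhiF τ (xTau x τ) (uK z j)).re with hPdef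
  set B : ℝ := Real.exp P * (Real.exp (0.4722 * τ + CQ) * S0) with hBdef
  have hsq1 : ∀ k : ℤ, Real.sqrt s₁ ≤ -(uK z k).re := fun k =>
    le_trans (Real.sqrt_le_sqrt hs1s) (root_facts hs k).2.1
  have hs1rt : 0 < Real.sqrt s₁ := Real.sqrt_pos.mpr hs1
  -- squared pointwise bound
  have hKb : ∀ k : Fin N, (‖Kz z τ γ (xTau x τ) (uK z j) (uK z (ℓ k))‖) ^ 2
      ≤ (B / (2 * s₁ * Real.sqrt s₁)) ^ 2 * (1 / (-(uK z (ℓ k)).re)) ^ 2 := by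
    intro k
    have h := Kz_abs_le x γ hδ₁ hδ₁' hτmax hz1 hz2 j (ℓ k)
    rw [← hs1def, ← hCQdef, ← hS0def, ← hPdef] at h
    have habs0 : 0 ≤ ‖Kz z τ γ (xTau x τ) (uK z j) (uK z (ℓ k))‖ :=
      norm_nonneg _
    have h2 := pow_le_pow_left₀ habs0 h 2
    refine h2.trans (le_of_eq ?_)
    have hp := (root_facts hs (ℓ k)).1
    rw [hBdef]
    field_simp
  have hsum1 : ∑ k : Fin N, (‖Kz z τ γ (xTau x τ) (uK z j) (uK z (ℓ k))‖) ^ 2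
      ≤ (B / (2 * s₁ * Real.sqrt s₁)) ^ 2 * ∑ k : Fin N, (1 / (-(uK z (ℓ k)).re)) ^ 2 := by
    rw [Finset.mul_sum]
    exact Finset.sum_le_sum fun k _ => hKb k
  -- counting bound
  set T : Finset ℤ := Finset.image ℓ Finset.univ with hTdef
  have hTcard : T.card = N := by
    rw [hTdef, Finset.card_image_of_injective _ hℓ, Finset.card_univ, Fintype.card_fin]
  have hsum2 : ∑ k : Fin N, (1 / (-(uK z (ℓ k)).re)) ^ 2 = ∑ n ∈ T, (1 / (-(uK z n).re)) ^ 2 := by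
    rw [hTdef]
    exact (Finset.sum_image (f := fun n : ℤ => (1 / (-(uK z n).re)) ^ 2)
      (fun a _ b _ h => hℓ h)).symm
  have herase : ∑ n ∈ T.erase 0, (1 / (-(uK z n).re)) ^ 2 ≤ 3 + 2 * Real.log N := by
    have hle : ∀ n ∈ T.erase 0, (1 / (-(uK z n).re)) ^ 2 ≤ 1 / |(n : ℝ)| := by
      intro n hn
      have hn0 : n ≠ 0 := Finset.ne_of_mem_erase hn
      obtain ⟨hp, -, -, hpk, -⟩ := root_facts hs n
      have habs1 : (1 : ℝ) ≤ |(n : ℝ)| := by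
        rw [show |(n : ℝ)| = ((|n| : ℤ) : ℝ) by rw [Int.cast_abs]]
        exact_mod_cast Int.one_le_abs hn0
      have hpisq : Real.pi * |(n : ℝ)| ≤ (-(uK z n).re) ^ 2 := by
        have h1 := pow_le_pow_left₀ (Real.sqrt_nonneg _) hpk 2
        rwa [Real.sq_sqrt (by positivity)] at h1
      have h2 : |(n : ℝ)| ≤ (-(uK z n).re) ^ 2 := by
        nlinarith [Real.pi_gt_three]
      rw [div_pow, one_pow]
      exact one_div_le_one_div_of_le (by linarith) h2
    calc ∑ n ∈ T.erase 0, (1 / (-(uK z n).re)) ^ 2 ≤ ∑ n ∈ T.erase 0, 1 / |(n : ℝ)| :=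
          Finset.sum_le_sum hle
      _ ≤ 3 + 2 * Real.log N := by
          apply sum_inv_abs_int_le N hN _ ?_ (Finset.notMem_erase _ _)
          calc (T.erase 0).card ≤ T.card := Finset.card_erase_le
            _ = N := hTcard
  have hzero : ∀ n : ℤ, (1 / (-(uK z n).re)) ^ 2 ≤ 1 / s₁ := by
    intro n
    obtain ⟨hp, hsq, -, -, -⟩ := root_facts hs n
    have h1 : Real.sqrt s₁ ≤ -(uK z n).re := hsq1 n
    have h2 : s₁ ≤ (-(uK z n).re) ^ 2 := by
      have h3 := mul_le_mul h1 h1 hs1rt.le (by linarith)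
      have h4 := Real.mul_self_sqrt hs1.le
      nlinarith
    rw [div_pow, one_pow]
    exact one_div_le_one_div_of_le hs1 h2
  have hsum3 : ∑ n ∈ T, (1 / (-(uK z n).re)) ^ 2 ≤ 1 / s₁ + (3 + 2 * Real.log N) := by
    by_cases h0 : (0 : ℤ) ∈ T
    · have := Finset.sum_erase_add T (fun n => (1 / (-(uK z n).re)) ^ 2) h0
      have h1 := hzero 0
      linarith [herase]
    · rw [← Finset.erase_eq_of_notMem h0]
      have : 0 ≤ 1 / s₁ := by positivity
      linarith [herase]
  -- putting it together
  have hlogN : Real.log 2 ≤ Real.log N :=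
    Real.log_le_log (by norm_num) (by exact_mod_cast hN)
  have hlogNpos : 0 < Real.log N := lt_of_lt_of_le hlog2 hlogN
  have hc4bound : 1 / s₁ + (3 + 2 * Real.log N) ≤ c4 * Real.log N := by
    have h1 : 1 / s₁ + 3 = ((1 / s₁ + 3) / Real.log 2) * Real.log 2 := by field_simp
    have h2 : ((1 / s₁ + 3) / Real.log 2) * Real.log 2
        ≤ ((1 / s₁ + 3) / Real.log 2) * Real.log N :=
      mul_le_mul_of_nonneg_left hlogN (div_nonneg (by positivity) hlog2.le)
    rw [hc4def]
    nlinarith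
  have hBsq : (B / (2 * s₁ * Real.sqrt s₁)) ^ 2
      = Real.exp (2 * CQ) * (Real.exp (2 * P + 0.9444 * τ) * S0 ^ 2) / (4 * s₁ ^ 3) := by
    have hss : Real.sqrt s₁ ^ 2 = s₁ := Real.sq_sqrt hs1.le
    have he1 : Real.exp P ^ 2 = Real.exp (2 * P) := by
      rw [← Real.exp_nat_mul]; norm_num
    have he2 : Real.exp (0.4722 * τ + CQ) ^ 2 = Real.exp (2 * CQ) * Real.exp (0.9444 * τ) := by
      rw [← Real.exp_nat_mul, ← Real.exp_add]
      congr 1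
      push_cast
      ring
    have he3 : Real.exp (2 * P + 0.9444 * τ) = Real.exp (2 * P) * Real.exp (0.9444 * τ) :=
      Real.exp_add _ _
    rw [hBdef, div_pow]
    rw [mul_pow, mul_pow, he1, he2, mul_pow, hss]
    rw [he3]
    ring_nf
  have hexpmono : Real.exp (2 * P + 0.9444 * τ) ≤ Real.exp (2 * P + 0.9468 * τ) := by
    apply Real.exp_le_exp.mpr
    nlinarith
  calc ∑ k : Fin N, (‖Kz z τ γ (xTau x τ) (uK z j) (uK z (ℓ k))‖) ^ 2
      ≤ (B / (2 * s₁ * Real.sqrt s₁)) ^ 2 * ∑ k : Fin N, (1 / (-(uK z (ℓ k)).re)) ^ 2 := hsum1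
    _ ≤ (B / (2 * s₁ * Real.sqrt s₁)) ^ 2 * (c4 * Real.log N) := by
        apply mul_le_mul_of_nonneg_left ?_ (sq_nonneg _)
        rw [hsum2]
        linarith [hsum3, hc4bound]
    _ = Real.exp (2 * CQ) * (Real.exp (2 * P + 0.9444 * τ) * S0 ^ 2) / (4 * s₁ ^ 3)
          * (c4 * Real.log N) := by rw [hBsq]
    _ ≤ Real.exp (2 * CQ) * (Real.exp (2 * P + 0.9468 * τ) * S0 ^ 2) / (4 * s₁ ^ 3)
          * (c4 * Real.log N) := by
        have hnum : Real.exp (2 * CQ) * (Real.exp (2 * P + 0.9444 * τ) * S0 ^ 2)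
            ≤ Real.exp (2 * CQ) * (Real.exp (2 * P + 0.9468 * τ) * S0 ^ 2) :=
          mul_le_mul_of_nonneg_left
            (mul_le_mul_of_nonneg_right hexpmono (sq_nonneg S0)) (Real.exp_pos _).le
        apply mul_le_mul_of_nonneg_right ?_ (by positivity)
        exact div_le_div_of_nonneg_right hnum (by positivity)
    _ ≤ C * Real.log N * Real.exp (2 * P + 0.9468 * τ) := by
        have hCge : Real.exp (2 * CQ) * S0 ^ 2 / (4 * s₁ ^ 3) * c4 ≤ C := by
          rw [hCdef]; linarith
        have hpos : 0 ≤ Real.log N * Real.exp (2 * P + 0.9468 * τ) := by positivity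
        have key : Real.exp (2 * CQ) * (Real.exp (2 * P + 0.9468 * τ) * S0 ^ 2) / (4 * s₁ ^ 3)
            * (c4 * Real.log N)
            = (Real.exp (2 * CQ) * S0 ^ 2 / (4 * s₁ ^ 3) * c4)
              * (Real.log N * Real.exp (2 * P + 0.9468 * τ)) := by ring
        rw [key]
        calc (Real.exp (2 * CQ) * S0 ^ 2 / (4 * s₁ ^ 3) * c4)
              * (Real.log N * Real.exp (2 * P + 0.9468 * τ))
            ≤ C * (Real.log N * Real.exp (2 * P + 0.9468 * τ)) :=
              mul_le_mul_of_nonneg_right hCge hpos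
          _ = C * Real.log N * Real.exp (2 * P + 0.9468 * τ) := by ring
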